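/- Let k be a field of characteristic 2 and G a finite group, and let G₂ = {g ∈ G : g² = 1}. The k-subspace of the group algebra k[G] consisting of the elements x with x* = x and t(x) = 0 has dimension (|G| + |G₂|)/2 − 1 over k. -/

import Mathlib

set_option synthInstance.maxHeartbeats 1000000
set_option maxHeartbeats 1000000


/-- The canonical involution `x ↦ x*` of the group algebra `k[G]`, determined by
`g* = g⁻¹` for `g ∈ G`: the coefficient of `g` in `gStar x` is the coefficient
of `g⁻¹` in `x`. -/
noncomputable def gStar {k G : Type*} [Semiring k] [Group G] (x : MonoidAlgebra k G) :
    MonoidAlgebra k G := MonoidAlgebra.ofCoeff (Finsupp.equivMapDomain (Equiv.inv G) x.coeff)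

lemma gStar_apply {k G : Type*} [Semiring k] [Group G] (x : MonoidAlgebra k G) (g : G) :
    (gStar x).coeff g = x.coeff g⁻¹ := rfl

lemma ma_add_apply {k G : Type*} [Semiring k] (a b : MonoidAlgebra k G) (g : G) :
    (a + b).coeff g = a.coeff g + b.coeff g := rfl

lemma ma_smul_apply {k G : Type*} [Semiring k] (c : k) (a : MonoidAlgebra k G) (g : G) :
    (c • a).coeff g = c * a.coeff g := rfl

/-- The `k`-subspace of `k[G]` consisting of the hermitian elements (`x* = x`) with
zero augmentation (`t x = Σ_g x_g = 0`). -/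
noncomputable def hermAugZero (k G : Type*) [Field k] [Group G] [Fintype G] :
    Submodule k (MonoidAlgebra k G) where
  carrier := {x | gStar x = x ∧ ∑ g : G, x.coeff g = 0}
  add_mem' := by
    rintro a b ⟨ha1, ha2⟩ ⟨hb1, hb2⟩
    refine ⟨?_, ?_⟩
    · ext g
      have h1 := congrArg (fun y => y.coeff g) ha1
      have h2 := congrArg (fun y => y.coeff g) hb1
      simp only [gStar_apply] at h1 h2
      simp only [gStar_apply, ma_add_apply, h1, h2]
    · simp only [ma_add_apply, Finset.sum_add_distrib, ha2, hb2, add_zero]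
  zero_mem' := by
    refine ⟨?_, by simp⟩
    ext g
    simp only [gStar_apply]
    rfl
  smul_mem' := by
    rintro c a ⟨ha1, ha2⟩
    refine ⟨?_, ?_⟩
    · ext g
      have h1 := congrArg (fun y => y.coeff g) ha1
      simp only [gStar_apply] at h1
      simp only [gStar_apply, ma_smul_apply, h1]
    · simp only [ma_smul_apply, ← Finset.mul_sum, ha2, mul_zero]

/-- setoid identifying `g` with `g⁻¹` -/
def invSetoid (G : Type*) [Group G] : Setoid G where
  r g h := h = g ∨ h = g⁻¹
  iseqv := by
    refine ⟨fun g => Or.inl rfl, ?_, ?_⟩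
    · rintro a b (rfl | rfl)
      · exact Or.inl rfl
      · exact Or.inr (inv_inv a).symm
    · rintro a b c (rfl | rfl) (rfl | rfl)
      · exact Or.inl rfl
      · exact Or.inr rfl
      · exact Or.inr rfl
      · rw [inv_inv]; exact Or.inl rfl

noncomputable instance invSetoidQuotFintype (G : Type*) [Group G] [Fintype G] :
    Fintype (Quotient (invSetoid G)) :=
  @Quotient.fintype _ _ (invSetoid G) (Classical.decRel _)


lemma sq_eq_one_iff' {G : Type*} [Group G] (g : G) : g ^ 2 = 1 ↔ g = g⁻¹ := by
  rw [pow_two, mul_eq_one_iff_eq_inv]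

lemma invSetoid_rel_iff {G : Type*} [Group G] (g a : G) :
    (Quotient.mk (invSetoid G) g = Quotient.mk (invSetoid G) a) ↔ (g = a ∨ g = a⁻¹) := by
  constructor
  · intro h
    rcases Quotient.exact h with h | h
    · exact Or.inl h.symm
    · exact Or.inr (by rw [h, inv_inv])
  · rintro (rfl | rfl)
    · rfl
    · exact Quotient.sound (Or.inr (inv_inv a).symm)

lemma invSetoid_count (G : Type*) [Group G] [Fintype G] :
    Nat.card G + Nat.card {g : G // g ^ 2 = 1} =
      2 * Nat.card (Quotient (invSetoid G)) := by
  classical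
  rw [Nat.card_eq_fintype_card, Nat.card_eq_fintype_card, Nat.card_eq_fintype_card]
  have h1 : Fintype.card G =
      ∑ q : Quotient (invSetoid G),
        (Finset.univ.filter (fun g : G => Quotient.mk (invSetoid G) g = q)).card := by
    rw [← Finset.card_univ]
    exact Finset.card_eq_sum_card_fiberwise (fun x _ => Finset.mem_univ _)
  have h2 : Fintype.card {g : G // g ^ 2 = 1} =
      ∑ q : Quotient (invSetoid G),
        (Finset.univ.filter
          (fun g : G => g ^ 2 = 1 ∧ Quotient.mk (invSetoid G) g = q)).card := by
    rw [Fintype.card_subtype]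
    rw [Finset.card_eq_sum_card_fiberwise
      (f := fun g : G => Quotient.mk (invSetoid G) g)
      (t := Finset.univ) (fun x _ => Finset.mem_univ _)]
    congr 1
    funext q
    congr 1
    ext g
    simp [and_comm]
  rw [h1, h2, ← Finset.sum_add_distrib, Finset.sum_congr rfl, Finset.sum_const,
    Finset.card_univ, smul_eq_mul, mul_comm]
  intro q _
  induction q using Quotient.ind with
  | _ a =>
    have hfib : (Finset.univ.filter
        (fun g : G => Quotient.mk (invSetoid G) g = Quotient.mk (invSetoid G) a)) =
        {a, a⁻¹} := by
      ext g
      simp only [Finset.mem_filter, Finset.mem_univ, true_and, Finset.mem_insert,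
        Finset.mem_singleton, invSetoid_rel_iff]
    by_cases ha : a = a⁻¹
    · have hsq : a ^ 2 = 1 := (sq_eq_one_iff' a).mpr ha
      have hfib2 : (Finset.univ.filter
          (fun g : G => g ^ 2 = 1 ∧ Quotient.mk (invSetoid G) g = Quotient.mk (invSetoid G) a)) =
          {a} := by
        ext g
        simp only [Finset.mem_filter, Finset.mem_univ, true_and, Finset.mem_singleton,
          invSetoid_rel_iff]
        constructor
        · rintro ⟨_, h | h⟩
          · exact h
          · exact h.trans ha.symm
        · rintro rfl
          exact ⟨hsq, Or.inl rfl⟩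
      rw [hfib, hfib2, ← ha]
      simp
    · have hsq : ¬ a ^ 2 = 1 := fun h => ha ((sq_eq_one_iff' a).mp h)
      have hsq' : ¬ (a⁻¹) ^ 2 = 1 := by
        intro h
        have := (sq_eq_one_iff' a⁻¹).mp h
        rw [inv_inv] at this
        exact ha this.symm
      have hfib2 : (Finset.univ.filter
          (fun g : G => g ^ 2 = 1 ∧ Quotient.mk (invSetoid G) g = Quotient.mk (invSetoid G) a)) =
          ∅ := by
        ext g
        simp only [Finset.mem_filter, Finset.mem_univ, true_and, Finset.notMem_empty,
          iff_false, not_and, invSetoid_rel_iff]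
        rintro hg (rfl | rfl)
        · exact hsq hg
        · exact hsq' hg
      rw [hfib, hfib2]
      rw [Finset.card_insert_of_notMem (by simpa using ha), Finset.card_singleton,
        Finset.card_empty]


/-- The subspace of hermitian elements. -/
noncomputable def herm (k G : Type*) [Field k] [Group G] :
    Submodule k (MonoidAlgebra k G) where
  carrier := {x | gStar x = x}
  add_mem' := by
    intro a b ha1 hb1
    ext g
    have h1 := congrArg (fun y => y.coeff g) ha1
    have h2 := congrArg (fun y => y.coeff g) hb1
    simp only [gStar_apply] at h1 h2
    simp only [gStar_apply, ma_add_apply, h1, h2]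
  zero_mem' := by
    ext g
    simp only [gStar_apply]
    rfl
  smul_mem' := by
    intro c a ha1
    ext g
    have h1 := congrArg (fun y => y.coeff g) ha1
    simp only [gStar_apply] at h1
    simp only [gStar_apply, ma_smul_apply, h1]

/-- hermitian elements are exactly functions on the quotient by `g ~ g⁻¹`. -/
noncomputable def hermEquiv (k G : Type*) [Field k] [Group G] [Fintype G] :
    herm k G ≃ₗ[k] (Quotient (invSetoid G) → k) where
  toFun x q := Quotient.liftOn q (fun g => (x : MonoidAlgebra k G).coeff g)
    (by
      rintro a b (rfl | rfl)
      · rfl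
      · have := congrArg (fun y => y.coeff a⁻¹) x.2
        simp only [gStar_apply, inv_inv] at this
        exact (show (x : MonoidAlgebra k G).coeff a = (x : MonoidAlgebra k G).coeff a⁻¹ from this))
  map_add' a b := by
    funext q
    induction q using Quotient.ind with
    | _ g => exact ma_add_apply _ _ g
  map_smul' c a := by
    funext q
    induction q using Quotient.ind with
    | _ g => exact ma_smul_apply c _ g
  invFun f := ⟨MonoidAlgebra.ofCoeff (Finsupp.equivFunOnFinite.symm (fun g => f (Quotient.mk (invSetoid G) g))), by
    ext g
    simp only [gStar_apply, MonoidAlgebra.coeff_ofCoeff, Finsupp.coe_equivFunOnFinite_symm]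
    congr 1
    exact (Quotient.sound (Or.inr (inv_inv g).symm) : Quotient.mk (invSetoid G) g⁻¹ = Quotient.mk (invSetoid G) g)⟩
  left_inv x := by
    apply Subtype.ext
    ext g
    simp only [MonoidAlgebra.coeff_ofCoeff, Finsupp.coe_equivFunOnFinite_symm]
    rfl
  right_inv f := by
    funext q
    induction q using Quotient.ind with
    | _ g => rfl

/-- augmentation on `herm`. -/
noncomputable def hermAug (k G : Type*) [Field k] [Group G] [Fintype G] :
    herm k G →ₗ[k] k where
  toFun x := ∑ g : G, (x : MonoidAlgebra k G).coeff g
  map_add' a b := by simp only [Submodule.coe_add, ma_add_apply, Finset.sum_add_distrib]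
  map_smul' c a := by
    simp only [SetLike.val_smul, ma_smul_apply, RingHom.id_apply, ← Finset.mul_sum,
      smul_eq_mul]

lemma one_mem_herm (k G : Type*) [Field k] [Group G] : (1 : MonoidAlgebra k G) ∈ herm k G := by
  show gStar 1 = 1
  ext g
  rw [gStar_apply]
  show Finsupp.single 1 1 g⁻¹ = Finsupp.single 1 1 g
  classical
  simp only [Finsupp.single_apply]
  exact if_congr (by simp [eq_comm, inv_eq_one]) rfl rfl

lemma hermAug_surj (k G : Type*) [Field k] [Group G] [Fintype G] :
    Function.Surjective (hermAug k G) := by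
  intro c
  refine ⟨c • ⟨1, one_mem_herm k G⟩, ?_⟩
  show ∑ g : G, (c • (1 : MonoidAlgebra k G)).coeff g = c
  simp only [ma_smul_apply, ← Finset.mul_sum]
  have : ∑ g : G, (1 : MonoidAlgebra k G).coeff g = 1 := by
    show ∑ g : G, Finsupp.single (1:G) (1:k) g = 1
    simp [Finsupp.single_apply]
  rw [this, mul_one]

noncomputable def hermAugZeroEquiv (k G : Type*) [Field k] [Group G] [Fintype G] :
    hermAugZero k G ≃ₗ[k] LinearMap.ker (hermAug k G) where
  toFun x := ⟨⟨x.1, x.2.1⟩, x.2.2⟩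
  map_add' a b := rfl
  map_smul' c a := rfl
  invFun y := ⟨y.1.1, y.1.2, y.2⟩
  left_inv x := rfl
  right_inv y := rfl

/-- For a field `k` of characteristic 2 and a finite group `G`, the space of hermitian
elements of `k[G]` with zero augmentation has dimension `(|G| + |G₂|)/2 - 1`, where
`G₂ = {g : G | g² = 1}`. -/
theorem stmt_2 (k G : Type*) [Field k] [CharP k 2] [Group G] [Fintype G] :
    Module.finrank k (hermAugZero k G) =
      (Nat.card G + Nat.card {g : G // g ^ 2 = 1}) / 2 - 1 := by
  have hherm : Module.finrank k (herm k G) = Nat.card (Quotient (invSetoid G)) := by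
    rw [(hermEquiv k G).finrank_eq, Module.finrank_pi, Nat.card_eq_fintype_card]
  have : FiniteDimensional k (herm k G) := Module.Finite.equiv (hermEquiv k G).symm
  have hrange : LinearMap.range (hermAug k G) = ⊤ :=
    LinearMap.range_eq_top.mpr (hermAug_surj k G)
  have hrk := LinearMap.finrank_range_add_finrank_ker (hermAug k G)
  rw [hrange, finrank_top, Module.finrank_self] at hrk
  have hker : Module.finrank k (hermAugZero k G) =
      Module.finrank k (LinearMap.ker (hermAug k G)) :=
    (hermAugZeroEquiv k G).finrank_eq
  have hcount := invSetoid_count G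
  omega
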